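/- arXiv:1111.1294 — 2 statements merged into one kernel-verified Lean document; each statement's English description precedes it below -/
import Mathlib

section
/- The Apéry set of S is β-rectangular (Ap(S) = B) if and only if f + m = Σ_{i=2}^ν β_i g_i, where f is the Frobenius number and m the multiplicity of S. -/
open Finset

/-- `S` is a numerical semigroup: a submonoid of `(ℕ, +)` with finite complement. -/
def IsNumSgp (S : Set ℕ) : Prop :=
  0 ∈ S ∧ (∀ a ∈ S, ∀ b ∈ S, a + b ∈ S) ∧ (Sᶜ : Set ℕ).Finite

/-- `s` belongs to the Apéry set of `S` with respect to `m`: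
`s ∈ S` and `s - m ∉ S` (i.e. no `u ∈ S` with `u + m = s`). -/
def InApery (S : Set ℕ) (m s : ℕ) : Prop :=
  s ∈ S ∧ ∀ u ∈ S, u + m ≠ s

def AperySet (S : Set ℕ) (m : ℕ) : Set ℕ := {s | InApery S m s}

/-- `ordS S s` is the largest `h` such that `s` is a sum of `h` nonzero elements of `S`. -/
noncomputable def ordS (S : Set ℕ) (s : ℕ) : ℕ :=
  sSup {h : ℕ | ∃ f : Fin h → ℕ, (∀ j, f j ∈ S ∧ f j ≠ 0) ∧ ∑ j, f j = s}

/-- `g` generates `S`. -/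
def Generates (S : Set ℕ) {ν : ℕ} (g : Fin ν → ℕ) : Prop :=
  ∀ s, s ∈ S ↔ ∃ lam : Fin ν → ℕ, ∑ i, lam i * g i = s

/-- `g` is a minimal generating system of `S`: it generates `S`
and no `g i` is generated by the remaining generators. -/
def MinimalGen (S : Set ℕ) {ν : ℕ} (g : Fin ν → ℕ) : Prop :=
  Generates S g ∧ ∀ i, ¬ ∃ lam : Fin ν → ℕ, lam i = 0 ∧ ∑ j, lam j * g j = g i

/-- `lam` is a maximal representation of `s`: the coefficient sum equals `ordS S s`. -/
def IsMaxRep (S : Set ℕ) {ν : ℕ} (g : Fin ν → ℕ) (lam : Fin ν → ℕ) (s : ℕ) : Prop :=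
  ∑ i, lam i * g i = s ∧ ∑ i, lam i = ordS S s

/-- `s` has a unique maximal representation. -/
def UniqueMaxRep (S : Set ℕ) {ν : ℕ} (g : Fin ν → ℕ) (s : ℕ) : Prop :=
  ∃! lam : Fin ν → ℕ, IsMaxRep S g lam s

/-- `β_i = max {h | h g_i ∈ Ap(S) and ord(h g_i) = h}`. -/
noncomputable def betaN (S : Set ℕ) (m : ℕ) {ν : ℕ} (g : Fin ν → ℕ) (i : Fin ν) : ℕ :=
  sSup {h : ℕ | InApery S m (h * g i) ∧ ordS S (h * g i) = h}

/-- `γ_i = max {h | h g_i ∈ Ap(S), ord(h g_i) = h and h g_i has a unique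
maximal representation}`. -/
noncomputable def gammaN (S : Set ℕ) (m : ℕ) {ν : ℕ} (g : Fin ν → ℕ) (i : Fin ν) : ℕ :=
  sSup {h : ℕ | InApery S m (h * g i) ∧ ordS S (h * g i) = h ∧ UniqueMaxRep S g (h * g i)}

/-- `B = {Σ_{i≥2} λ_i g_i : 0 ≤ λ_i ≤ β_i}`. -/
def Bset (S : Set ℕ) (m : ℕ) {ν : ℕ} [NeZero ν] (g : Fin ν → ℕ) : Set ℕ :=
  {s | ∃ lam : Fin ν → ℕ, lam 0 = 0 ∧ (∀ i, lam i ≤ betaN S m g i) ∧ ∑ i, lam i * g i = s}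

/-- `Γ = {Σ_{i≥2} λ_i g_i : 0 ≤ λ_i ≤ γ_i}`. -/
def GammaSet (S : Set ℕ) (m : ℕ) {ν : ℕ} [NeZero ν] (g : Fin ν → ℕ) : Set ℕ :=
  {s | ∃ lam : Fin ν → ℕ, lam 0 = 0 ∧ (∀ i, lam i ≤ gammaN S m g i) ∧ ∑ i, lam i * g i = s}

/-- `s ⪯_M t`. -/
def predM (S : Set ℕ) (s t : ℕ) : Prop :=
  ∃ u ∈ S, s + u = t ∧ ordS S s + ordS S u = ordS S t

/-- Multiset version of the representation set underlying `ordS`. -/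
def RepSet (S : Set ℕ) (s : ℕ) : Set ℕ :=
  {h | ∃ M : Multiset ℕ, (∀ x ∈ M, x ∈ S ∧ x ≠ 0) ∧ Multiset.card M = h ∧ M.sum = s}


lemma ordS_eq (S : Set ℕ) (s : ℕ) : ordS S s = sSup (RepSet S s) := by
  unfold ordS
  congr 1
  ext h
  constructor
  · rintro ⟨F, hF, hsum⟩
    refine ⟨Finset.univ.val.map F, ?_, ?_, ?_⟩
    · intro x hx
      obtain ⟨j, -, rfl⟩ := Multiset.mem_map.mp hx
      exact hF j
    · simp
    · simpa [Finset.sum] using hsum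
  · rintro ⟨M, hM, hcard, hsum⟩
    have hlen : M.toList.length = h := by rw [Multiset.length_toList, hcard]
    refine ⟨fun j => M.toList.get (Fin.cast hlen.symm j), ?_, ?_⟩
    · intro j
      exact hM _ (Multiset.mem_toList.mp (List.get_mem _ _))
    · have := Equiv.sum_comp (finCongr hlen.symm) (fun i => M.toList.get i)
      simp only [finCongr_apply] at this
      rw [this]
      have h2 : ∑ i : Fin M.toList.length, M.toList.get i = M.toList.sum := by
        simp [List.get_eq_getElem, Fin.sum_univ_getElem M.toList]
      rw [h2, Multiset.sum_toList, hsum]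

section Main
variable {S : Set ℕ} {ν : ℕ} {g : Fin ν → ℕ}

lemma card_finset_sum {α : Type*} (s : Finset α) (f : α → Multiset ℕ) :
    Multiset.card (∑ i ∈ s, f i) = ∑ i ∈ s, Multiset.card (f i) := by
  induction s using Finset.cons_induction <;> simp [*]

lemma sum_finset_sum {α : Type*} (s : Finset α) (f : α → Multiset ℕ) :
    (∑ i ∈ s, f i).sum = ∑ i ∈ s, (f i).sum := by
  induction s using Finset.cons_induction <;> simp [*]


lemma memS_of_coeffs (hgen : Generates S g) (lam : Fin ν → ℕ) :
    ∑ i, lam i * g i ∈ S := (hgen _).mpr ⟨lam, rfl⟩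

lemma gen_mem (hgen : Generates S g) (i : Fin ν) : g i ∈ S := by
  have := memS_of_coeffs hgen (fun j => if j = i then 1 else 0)
  simpa [Finset.sum_ite_eq'] using this

lemma split_sum (μ : Fin ν → ℕ) (i₀ : Fin ν) (h : 1 ≤ μ i₀) :
    ∑ j, μ j * g j = g i₀ + ∑ j, (Function.update μ i₀ (μ i₀ - 1)) j * g j := by
  rw [← Finset.add_sum_erase _ (fun j => μ j * g j) (Finset.mem_univ i₀),
      ← Finset.add_sum_erase _ (fun j => (Function.update μ i₀ (μ i₀ - 1)) j * g j)
        (Finset.mem_univ i₀)]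
  have he : ∑ j ∈ univ.erase i₀, (Function.update μ i₀ (μ i₀ - 1)) j * g j
      = ∑ j ∈ univ.erase i₀, μ j * g j :=
    Finset.sum_congr rfl fun j hj => by
      rw [Function.update_of_ne (Finset.ne_of_mem_erase hj)]
  rw [he, Function.update_self, ← add_assoc]
  congr 1
  obtain ⟨k, hk⟩ := Nat.exists_eq_add_of_le h
  have h1 : 1 + k - 1 = k := by omega
  rw [hk, h1]; ring

lemma repSet_bddAbove (s : ℕ) : BddAbove (RepSet S s) := by
  refine ⟨s, fun h hh => ?_⟩
  obtain ⟨M, hM, hcard, hsum⟩ := hh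
  have : Multiset.card M • 1 ≤ M.sum :=
    Multiset.card_nsmul_le_sum fun x hx => Nat.one_le_iff_ne_zero.mpr (hM x hx).2
  simpa [hcard, hsum] using this

lemma coeff_mem_repSet (hgen : Generates S g) (hpos : ∀ i, g i ≠ 0) (lam : Fin ν → ℕ) :
    (∑ i, lam i) ∈ RepSet S (∑ i, lam i * g i) := by
  refine ⟨∑ i, Multiset.replicate (lam i) (g i), ?_, ?_, ?_⟩
  · intro x hx
    obtain ⟨i, -, hi⟩ := Multiset.mem_sum.mp hx
    rw [Multiset.eq_of_mem_replicate hi]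
    exact ⟨gen_mem hgen i, hpos i⟩
  · rw [card_finset_sum]; simp
  · rw [sum_finset_sum]; simp [Multiset.sum_replicate, smul_eq_mul]

lemma repSet_nonempty (hgen : Generates S g) (hpos : ∀ i, g i ≠ 0) {s : ℕ} (hs : s ∈ S) :
    (RepSet S s).Nonempty := by
  obtain ⟨lam, rfl⟩ := (hgen s).mp hs
  exact ⟨_, coeff_mem_repSet hgen hpos lam⟩

lemma ord_mem_repSet (hgen : Generates S g) (hpos : ∀ i, g i ≠ 0) {s : ℕ} (hs : s ∈ S) :
    ordS S s ∈ RepSet S s := by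
  rw [ordS_eq]
  exact Nat.sSup_mem (repSet_nonempty hgen hpos hs) (repSet_bddAbove s)

lemma le_ord {s h : ℕ} (hh : h ∈ RepSet S s) : h ≤ ordS S s := by
  rw [ordS_eq]
  exact le_csSup (repSet_bddAbove s) hh

lemma repSet_add {s₁ s₂ h₁ h₂ : ℕ} (hh₁ : h₁ ∈ RepSet S s₁) (hh₂ : h₂ ∈ RepSet S s₂) :
    h₁ + h₂ ∈ RepSet S (s₁ + s₂) := by
  obtain ⟨M₁, hM₁, hc₁, hs₁⟩ := hh₁
  obtain ⟨M₂, hM₂, hc₂, hs₂⟩ := hh₂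
  refine ⟨M₁ + M₂, ?_, by simp [hc₁, hc₂], by simp [hs₁, hs₂]⟩
  intro x hx
  rcases Multiset.mem_add.mp hx with h | h
  · exact hM₁ x h
  · exact hM₂ x h

lemma coeff_sum_ne_zero {lam : Fin ν → ℕ} (hpos : ∀ i, g i ≠ 0)
    (hne : ∑ i, lam i * g i ≠ 0) : ∃ i, 1 ≤ lam i := by
  by_contra hc
  push_neg at hc
  exact hne (Finset.sum_eq_zero fun i _ => by have h0 : lam i = 0 := Nat.lt_one_iff.mp (hc i); rw [h0, zero_mul])

/-- Every member of a maximal-length multiset representation is a generator. -/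
lemma max_rep_elem_gen (hgen : Generates S g) (hpos : ∀ i, g i ≠ 0) {s : ℕ}
    (M : Multiset ℕ) (hM : ∀ x ∈ M, x ∈ S ∧ x ≠ 0) (hcard : Multiset.card M = ordS S s)
    (hsum : M.sum = s) : ∀ x ∈ M, ∃ i, x = g i := by
  intro x hx
  obtain ⟨hxS, hxne⟩ := hM x hx
  obtain ⟨μ, hμ⟩ := (hgen x).mp hxS
  obtain ⟨i₀, hi₀⟩ := coeff_sum_ne_zero hpos (hμ.symm ▸ hxne)
  set y := ∑ j, (Function.update μ i₀ (μ i₀ - 1)) j * g j with hy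
  have hxsplit : x = g i₀ + y := by rw [← hμ]; exact split_sum μ i₀ hi₀
  by_cases hy0 : y = 0
  · exact ⟨i₀, by omega⟩
  · exfalso
    have hyS : y ∈ S := memS_of_coeffs hgen _
    have hMpos : 1 ≤ Multiset.card M := by
      exact Multiset.card_pos_iff_exists_mem.mpr ⟨x, hx⟩
    have hmem : Multiset.card M + 1 ∈ RepSet S s := by
      refine ⟨g i₀ ::ₘ y ::ₘ M.erase x, ?_, ?_, ?_⟩
      · intro z hz
        rcases Multiset.mem_cons.mp hz with rfl | hz
        · exact ⟨gen_mem hgen i₀, hpos i₀⟩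
        rcases Multiset.mem_cons.mp hz with rfl | hz
        · exact ⟨hyS, hy0⟩
        · exact hM z (Multiset.mem_of_mem_erase hz)
      · simp [Multiset.card_erase_of_mem hx]
        omega
      · have hce : x ::ₘ M.erase x = M := Multiset.cons_erase hx
        show (g i₀ ::ₘ y ::ₘ M.erase x).sum = s
        rw [Multiset.sum_cons, Multiset.sum_cons, ← add_assoc, ← hxsplit, ← hsum, ← hce]
        simp
    have := le_ord hmem
    omega

lemma count_rep (hinj : Function.Injective g) (M : Multiset ℕ)
    (hall : ∀ x ∈ M, ∃ i, x = g i) :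
    ∑ i, M.count (g i) = Multiset.card M ∧ ∑ i, M.count (g i) * g i = M.sum := by
  induction M using Multiset.induction_on with
  | empty => simp
  | cons a M ih =>
    obtain ⟨i₀, rfl⟩ := hall a (Multiset.mem_cons_self a M)
    obtain ⟨ih1, ih2⟩ := ih fun x hx => hall x (Multiset.mem_cons_of_mem hx)
    constructor
    · simp only [Multiset.count_cons, hinj.eq_iff]
      rw [Finset.sum_add_distrib, ih1]
      simp [Finset.sum_ite_eq']
    · simp only [Multiset.count_cons, hinj.eq_iff, add_mul]
      rw [Finset.sum_add_distrib, ih2]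
      simp [Finset.sum_ite_eq', ite_mul, Multiset.sum_cons]
      ring

lemma max_rep_exists (hgen : Generates S g) (hpos : ∀ i, g i ≠ 0)
    (hinj : Function.Injective g) {s : ℕ} (hs : s ∈ S) :
    ∃ lam : Fin ν → ℕ, ∑ i, lam i * g i = s ∧ ∑ i, lam i = ordS S s := by
  obtain ⟨M, hM, hcard, hsum⟩ := ord_mem_repSet hgen hpos hs
  have hall := max_rep_elem_gen hgen hpos M hM hcard hsum
  obtain ⟨h1, h2⟩ := count_rep hinj M hall
  exact ⟨fun i => M.count (g i), by rw [h2, hsum], by rw [h1, hcard]⟩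

end Main



section Apery
variable {S : Set ℕ} {ν : ℕ} {g : Fin ν → ℕ} {f : ℕ}

lemma apery_sub (hadd : ∀ a ∈ S, ∀ b ∈ S, a + b ∈ S) {m a b : ℕ} (ha : a ∈ S) (hb : b ∈ S)
    (hab : InApery S m (a + b)) : InApery S m a :=
  ⟨ha, fun u hu hum => hab.2 (u + b) (hadd u hu b hb) (by omega)⟩

lemma apery_le_fm (hfmax : ∀ n, f < n → n ∈ S) {m s : ℕ} (hm : 0 < m) (hs : InApery S m s) :
    s ≤ f + m := by
  by_contra hc
  push_neg at hc
  exact hs.2 (s - m) (hfmax _ (by omega)) (by omega)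

lemma fm_apery (hf : f ∉ S) (hfmax : ∀ n, f < n → n ∈ S) {m : ℕ} (hm : 0 < m) :
    InApery S m (f + m) := by
  refine ⟨hfmax _ (by omega), fun u hu hum => ?_⟩
  have hue : u = f := by omega
  exact hf (hue ▸ hu)

lemma update_zero_sum (lam : Fin ν → ℕ) (i : Fin ν) (w : Fin ν → ℕ) :
    lam i * w i + ∑ j, (Function.update lam i 0) j * w j = ∑ j, lam j * w j := by
  rw [← Finset.add_sum_erase _ (fun j => lam j * w j) (Finset.mem_univ i),
      ← Finset.add_sum_erase _ (fun j => Function.update lam i 0 j * w j) (Finset.mem_univ i)]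
  simp only [Function.update_self, zero_mul, add_zero, zero_add]
  congr 1
  exact Finset.sum_congr rfl fun j hj => by
    rw [Function.update_of_ne (Finset.ne_of_mem_erase hj)]

lemma single_sum (c : ℕ) (i : Fin ν) (w : Fin ν → ℕ) :
    ∑ j, (if j = i then c else 0) * w j = c * w i := by
  simp [ite_mul, Finset.sum_ite_eq']

lemma betaN_bddAbove [NeZero ν] (hfmax : ∀ n, f < n → n ∈ S) (hm : 0 < g 0) (hpos : ∀ i, g i ≠ 0)
    (i : Fin ν) : BddAbove {h : ℕ | InApery S (g 0) (h * g i) ∧ ordS S (h * g i) = h} := by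
  refine ⟨f + g 0, fun h hh => ?_⟩
  have h1 : h * g i ≤ f + g 0 := apery_le_fm hfmax hm hh.1
  have h2 : h ≤ h * g i := Nat.le_mul_of_pos_right h (Nat.pos_of_ne_zero (hpos i))
  omega

lemma max_rep_apery_bounds [NeZero ν] (hgen : Generates S g) (hpos : ∀ i, g i ≠ 0)
    (hadd : ∀ a ∈ S, ∀ b ∈ S, a + b ∈ S) (hfmax : ∀ n, f < n → n ∈ S) (hm : 0 < g 0)
    {s : ℕ} (hs : InApery S (g 0) s) (lam : Fin ν → ℕ)
    (hrep : ∑ i, lam i * g i = s) (hmax : ∑ i, lam i = ordS S s) :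
    lam 0 = 0 ∧ ∀ i, lam i ≤ betaN S (g 0) g i := by
  constructor
  · by_contra h0
    have h1 : 1 ≤ lam 0 := Nat.one_le_iff_ne_zero.mpr h0
    have hsplit := split_sum (g := g) lam 0 h1
    set u := ∑ j, (Function.update lam 0 (lam 0 - 1)) j * g j with hu
    exact hs.2 u (memS_of_coeffs hgen _) (by omega)
  · intro i
    set rest := ∑ j, (Function.update lam i 0) j * g j with hrest
    have hkey : lam i * g i + rest = s := by rw [hrest, update_zero_sum, hrep]
    have hmemS : lam i * g i ∈ S := by
      have := memS_of_coeffs hgen (fun j => if j = i then lam i else 0)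
      rwa [single_sum] at this
    have hap : InApery S (g 0) (lam i * g i) := by
      refine ⟨hmemS, fun u hu hum => ?_⟩
      exact hs.2 (u + rest) (hadd u hu rest (memS_of_coeffs hgen _)) (by omega)
    have hord : ordS S (lam i * g i) = lam i := by
      apply le_antisymm
      · obtain ⟨M, hM, hcard, hsum⟩ := ord_mem_repSet hgen hpos hmemS
        have h2 := coeff_mem_repSet hgen hpos (Function.update lam i 0)
        have h3 := repSet_add ⟨M, hM, hcard, hsum⟩ h2
        rw [hkey] at h3
        have h4 := le_ord h3
        have h5 : lam i + ∑ j, Function.update lam i 0 j = ∑ j, lam j := by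
          have := update_zero_sum lam i (fun _ => 1)
          simpa using this
        omega
      · have h6 := coeff_mem_repSet hgen hpos (fun j => if j = i then lam i else 0)
        rw [single_sum] at h6
        have h7 : ∑ j, (if j = i then lam i else 0) = lam i := by
          simp [Finset.sum_ite_eq']
        rw [h7] at h6
        exact le_ord h6
    exact le_csSup (betaN_bddAbove hfmax hm hpos i) ⟨hap, hord⟩

end Apery





lemma ite_sum_erase {ν : ℕ} [NeZero ν] (w : Fin ν → ℕ) :
    ∑ i, (if i = (0 : Fin ν) then 0 else w i) = ∑ i ∈ Finset.univ.erase 0, w i := by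
  have h1 : ∑ i ∈ Finset.univ.erase 0, (if i = (0 : Fin ν) then 0 else w i)
      = ∑ i ∈ Finset.univ.erase 0, w i :=
    Finset.sum_congr rfl fun i hi => if_neg (Finset.ne_of_mem_erase hi)
  rw [← h1]
  exact (Finset.sum_erase (f := fun i => if i = (0 : Fin ν) then 0 else w i) Finset.univ
    ((if_pos rfl : (if (0:Fin ν) = 0 then 0 else w 0) = 0))).symm

theorem betaRect_iff_frobenius (S : Set ℕ) {ν : ℕ} [NeZero ν] (g : Fin ν → ℕ) (hν : 2 ≤ ν)
    (hS : IsNumSgp S) (hgen : MinimalGen S g) (hmono : StrictMono g)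
    (hmpos : 0 < g 0) (hmul : ∀ s ∈ S, s ≠ 0 → g 0 ≤ s)
    (f : ℕ) (hf : f ∉ S) (hfmax : ∀ n, f < n → n ∈ S) :
    AperySet S (g 0) = Bset S (g 0) g ↔
      f + g 0 = ∑ i ∈ Finset.univ.erase 0, betaN S (g 0) g i * g i := by
  obtain ⟨hG, -⟩ := hgen
  have hadd := hS.2.1
  have hpos : ∀ i, g i ≠ 0 := fun i => by
    have : g 0 ≤ g i := hmono.monotone (Fin.zero_le i)
    omega
  have hfm := fm_apery (S := S) hf hfmax hmpos
  constructor
  · intro hAB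
    -- f + g 0 ∈ Bset gives ≤ ; the beta sum is in Bset = Apery gives ≥
    have h1 : f + g 0 ∈ Bset S (g 0) g := hAB ▸ hfm
    obtain ⟨lam, h0, hb, hsum⟩ := h1
    have hle : f + g 0 ≤ ∑ i ∈ Finset.univ.erase 0, betaN S (g 0) g i * g i := by
      rw [← hsum, ← Finset.add_sum_erase _ (fun i => lam i * g i) (Finset.mem_univ 0), h0,
        zero_mul, zero_add]
      exact Finset.sum_le_sum fun i _ => Nat.mul_le_mul_right _ (hb i)
    have h2 : (∑ i ∈ Finset.univ.erase 0, betaN S (g 0) g i * g i) ∈ Bset S (g 0) g := by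
      refine ⟨fun i => if i = 0 then 0 else betaN S (g 0) g i, if_pos rfl,
        fun i => by dsimp only; split <;> omega, ?_⟩
      rw [← ite_sum_erase (fun i => betaN S (g 0) g i * g i)]
      exact Finset.sum_congr rfl fun i _ => by
        rcases eq_or_ne i 0 with rfl | h
        · simp
        · simp [h]
    have h3 : (∑ i ∈ Finset.univ.erase 0, betaN S (g 0) g i * g i) ∈ AperySet S (g 0) := by
      rw [hAB]; exact h2
    have hge := apery_le_fm hfmax hmpos h3
    omega
  · intro hfm_eq
    ext s
    constructor
    · intro hs
      obtain ⟨lam, hrep, hmax⟩ := max_rep_exists hG hpos hmono.injective hs.1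
      obtain ⟨h0, hb⟩ := max_rep_apery_bounds hG hpos hadd hfmax hmpos hs lam hrep hmax
      exact ⟨lam, h0, hb, hrep⟩
    · rintro ⟨lam, h0, hb, rfl⟩
      set κ : Fin ν → ℕ := fun i => if i = 0 then 0 else betaN S (g 0) g i - lam i with hκ
      have hsum : (∑ i, lam i * g i) + ∑ i, κ i * g i = f + g 0 := by
        rw [← Finset.sum_add_distrib]
        have : ∀ i ∈ Finset.univ, lam i * g i + κ i * g i
            = (if i = (0 : Fin ν) then 0 else betaN S (g 0) g i * g i) := by
          intro i _
          rcases eq_or_ne i 0 with rfl | h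
          · simp [h0, hκ]
          · have hbi := hb i
            simp only [hκ, if_neg h, ← add_mul]
            congr 1
            omega
        rw [Finset.sum_congr rfl this, ite_sum_erase, ← hfm_eq]
      have := apery_sub hadd (memS_of_coeffs hG lam) (memS_of_coeffs hG κ)
        (by rw [hsum]; exact hfm)
      exact this
end

section
/- If the Apéry set of S is β-rectangular, then β_i = γ_i for every i = 2, …, ν. -/
open Finset

section AuxBetaRect

variable {S : Set ℕ} {ν : ℕ}

private lemma mem_repSet_le {s h : ℕ}
    (hh : ∃ f : Fin h → ℕ, (∀ j, f j ∈ S ∧ f j ≠ 0) ∧ ∑ j, f j = s) : h ≤ s := by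
  obtain ⟨f, hf, hsum⟩ := hh
  calc h = ∑ _j : Fin h, 1 := by simp
  _ ≤ ∑ j, f j := Finset.sum_le_sum fun j _ => Nat.one_le_iff_ne_zero.mpr (hf j).2
  _ = s := hsum

private lemma ordSet_bdd (s : ℕ) :
    BddAbove {h : ℕ | ∃ f : Fin h → ℕ, (∀ j, f j ∈ S ∧ f j ≠ 0) ∧ ∑ j, f j = s} :=
  ⟨s, fun _h hh => mem_repSet_le hh⟩

private lemma ordSet_nonempty {s : ℕ} (hs : s ∈ S) :
    Set.Nonempty {h : ℕ | ∃ f : Fin h → ℕ, (∀ j, f j ∈ S ∧ f j ≠ 0) ∧ ∑ j, f j = s} := by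
  rcases eq_or_ne s 0 with rfl | hs0
  · exact ⟨0, Fin.elim0, fun j => j.elim0, by simp⟩
  · exact ⟨1, fun _ => s, fun j => ⟨hs, hs0⟩, by simp⟩

private lemma ord_mem {s : ℕ} (hs : s ∈ S) :
    ∃ f : Fin (ordS S s) → ℕ, (∀ j, f j ∈ S ∧ f j ≠ 0) ∧ ∑ j, f j = s :=
  Nat.sSup_mem (ordSet_nonempty hs) (ordSet_bdd s)

private lemma ord_zero : ordS S 0 = 0 := by
  have h0 : (0:ℕ) ∈ {h : ℕ | ∃ f : Fin h → ℕ, (∀ j, f j ∈ S ∧ f j ≠ 0) ∧ ∑ j, f j = 0} :=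
    ⟨Fin.elim0, fun j => j.elim0, by simp⟩
  have h1 := Nat.sSup_mem ⟨0, h0⟩ (ordSet_bdd (S := S) 0)
  have h2 := mem_repSet_le h1
  exact Nat.le_zero.mp h2

private lemma sum_ite_single (g : Fin ν → ℕ) (i : Fin ν) (c : ℕ) :
    ∑ l, (if l = i then c else 0) * g l = c * g i := by
  rw [Finset.sum_eq_single i]
  · simp
  · intro b _ hb; simp [hb]
  · intro h; exact absurd (Finset.mem_univ i) h

private lemma sum_ite_plain (i : Fin ν) (c : ℕ) :
    ∑ l : Fin ν, (if l = i then c else 0) = c := by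
  simp

private lemma sum_update_split (lam : Fin ν → ℕ) (j : Fin ν) (F : Fin ν → ℕ) :
    ∑ l, lam l * F l = lam j * F j + ∑ l, (Function.update lam j 0) l * F l := by
  classical
  have h1 : ∀ l, (Function.update lam j 0) l * F l
      = Function.update (fun l => lam l * F l) j 0 l := by
    intro l
    rcases eq_or_ne l j with rfl | hl
    · simp
    · simp [Function.update_of_ne hl]
  have h2 : ∑ l, (Function.update lam j 0) l * F l
      = ∑ l ∈ Finset.univ \ {j}, lam l * F l := by
    rw [Finset.sum_congr rfl fun l _ => h1 l,
      Finset.sum_update_of_mem (Finset.mem_univ j)]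
    simp
  rw [h2, Finset.sum_eq_sum_sdiff_singleton_add (Finset.mem_univ j)]
  omega

private lemma sum_update_split' (lam : Fin ν → ℕ) (j : Fin ν) :
    ∑ l, lam l = lam j + ∑ l, (Function.update lam j 0) l := by
  have h := sum_update_split lam j (fun _ => 1)
  simpa using h

private lemma exists_flat (g : Fin ν → ℕ) :
    ∀ (k : ℕ) (lam : Fin ν → ℕ), ∑ l, lam l = k →
    ∃ f : Fin k → ℕ, (∀ j, ∃ l, f j = g l) ∧ ∑ j, f j = ∑ l, lam l * g l := by
  intro k
  induction k with
  | zero =>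
    intro lam hlam
    refine ⟨Fin.elim0, fun j => j.elim0, ?_⟩
    have hz : ∀ l ∈ Finset.univ, lam l = 0 := fun l hl =>
      (Finset.sum_eq_zero_iff.mp hlam) l hl
    have hz2 : ∑ l, lam l * g l = 0 :=
      Finset.sum_eq_zero fun l hl => by rw [hz l hl, zero_mul]
    rw [hz2]
    simp
  | succ k ih =>
    intro lam hlam
    have hex : ∃ l, lam l ≠ 0 := by
      by_contra h
      push_neg at h
      rw [Finset.sum_eq_zero fun l _ => h l] at hlam
      omega
    obtain ⟨l0, hl0⟩ := hex
    set lam' := Function.update lam l0 (lam l0 - 1) with hlam'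
    have hupd : Function.update lam' l0 0 = Function.update lam l0 0 := by
      rw [hlam', Function.update_idem]
    have hl'0 : lam' l0 = lam l0 - 1 := by rw [hlam']; simp
    have hc1 : ∑ l, lam' l = k := by
      have a := sum_update_split' lam l0
      have b := sum_update_split' lam' l0
      rw [hupd] at b
      omega
    obtain ⟨f', hf', hsum'⟩ := ih lam' hc1
    refine ⟨Fin.cons (g l0) f', ?_, ?_⟩
    · intro j
      induction j using Fin.cases with
      | zero => exact ⟨l0, by simp⟩
      | succ j' => simpa using hf' j'
    · rw [Fin.sum_cons, hsum']
      have a := sum_update_split lam l0 g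
      have b := sum_update_split lam' l0 g
      rw [hupd, hl'0] at b
      have hmul : lam l0 * g l0 = g l0 + (lam l0 - 1) * g l0 := by
        have hp : lam l0 - 1 + 1 = lam l0 := Nat.succ_pred_eq_of_pos (Nat.pos_of_ne_zero hl0)
        calc lam l0 * g l0 = (lam l0 - 1 + 1) * g l0 := by rw [hp]
        _ = (lam l0 - 1) * g l0 + 1 * g l0 := by rw [add_mul]
        _ = g l0 + (lam l0 - 1) * g l0 := by rw [one_mul]; omega
      omega

private lemma ord_ge_rep {g : Fin ν → ℕ} (hg : ∀ l, g l ∈ S) (hgpos : ∀ l, g l ≠ 0)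
    (lam : Fin ν → ℕ) : ∑ l, lam l ≤ ordS S (∑ l, lam l * g l) := by
  obtain ⟨f, hf, hsum⟩ := exists_flat g (∑ l, lam l) lam rfl
  refine le_csSup (ordSet_bdd _) ?_
  refine ⟨f, fun j => ?_, hsum⟩
  obtain ⟨l, hl⟩ := hf j
  exact hl ▸ ⟨hg l, hgpos l⟩

private lemma ord_superadd {a b : ℕ} (ha : a ∈ S) (hb : b ∈ S) :
    ordS S a + ordS S b ≤ ordS S (a + b) := by
  obtain ⟨f₁, hf₁, hs₁⟩ := ord_mem ha
  obtain ⟨f₂, hf₂, hs₂⟩ := ord_mem hb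
  refine le_csSup (ordSet_bdd _) ⟨Fin.append f₁ f₂, ?_, ?_⟩
  · intro j
    induction j using Fin.addCases with
    | left j1 => simpa using hf₁ j1
    | right j2 => simpa using hf₂ j2
  · rw [Fin.sum_univ_add]
    simp [hs₁, hs₂]

private lemma max_rep_exists_s10 {g : Fin ν → ℕ} (hgen : Generates S g)
    (hg : ∀ l, g l ∈ S) (hgpos : ∀ l, g l ≠ 0) {s : ℕ} (hs : s ∈ S) :
    ∃ ρ : Fin ν → ℕ, IsMaxRep S g ρ s := by
  obtain ⟨f, hf, hsum⟩ := ord_mem hs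
  choose lamf hlamf using fun j => (hgen (f j)).mp (hf j).1
  refine ⟨fun l => ∑ j, lamf j l, ?_, ?_⟩
  · calc ∑ l, (∑ j, lamf j l) * g l = ∑ l, ∑ j, lamf j l * g l := by
          refine Finset.sum_congr rfl fun l _ => ?_
          rw [Finset.sum_mul]
    _ = ∑ j, ∑ l, lamf j l * g l := Finset.sum_comm
    _ = ∑ j, f j := Finset.sum_congr rfl fun j _ => hlamf j
    _ = s := hsum
  · refine le_antisymm ?_ ?_
    · have h1 := ord_ge_rep hg hgpos (fun l => ∑ j, lamf j l)
      have h2 : ∑ l, (∑ j, lamf j l) * g l = s := by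
        calc ∑ l, (∑ j, lamf j l) * g l = ∑ l, ∑ j, lamf j l * g l := by
              refine Finset.sum_congr rfl fun l _ => ?_
              rw [Finset.sum_mul]
        _ = ∑ j, ∑ l, lamf j l * g l := Finset.sum_comm
        _ = ∑ j, f j := Finset.sum_congr rfl fun j _ => hlamf j
        _ = s := hsum
      rwa [h2] at h1
    · calc ordS S s = ∑ _j : Fin (ordS S s), 1 := by simp
      _ ≤ ∑ j, ∑ l, lamf j l := by
          refine Finset.sum_le_sum fun j _ => ?_
          by_contra hzero
          push_neg at hzero
          have : ∀ l ∈ Finset.univ, lamf j l = 0 :=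
            Finset.sum_eq_zero_iff.mp (Nat.lt_one_iff.mp hzero)
          have : f j = 0 := by
            rw [← hlamf j]
            exact Finset.sum_eq_zero fun l hl => by rw [this l hl, zero_mul]
          exact (hf j).2 this
      _ = ∑ l, ∑ j, lamf j l := Finset.sum_comm

private lemma betaSet_ne (hS : IsNumSgp S) {g : Fin ν → ℕ} [NeZero ν]
    (hg0 : 0 < g 0) (i : Fin ν) :
    Set.Nonempty {h : ℕ | InApery S (g 0) (h * g i) ∧ ordS S (h * g i) = h} := by
  refine ⟨0, ⟨⟨?_, ?_⟩, ?_⟩⟩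
  · simpa using hS.1
  · intro u _ heq
    rw [zero_mul] at heq
    omega
  · rw [zero_mul]; exact ord_zero

private lemma betaSet_bdd (hS : IsNumSgp S) {g : Fin ν → ℕ} [NeZero ν]
    (hgpos : ∀ l, g l ≠ 0) (i : Fin ν) :
    BddAbove {h : ℕ | InApery S (g 0) (h * g i) ∧ ordS S (h * g i) = h} := by
  obtain ⟨ub, hub⟩ := hS.2.2.bddAbove
  refine ⟨ub + g 0, ?_⟩
  intro h hh
  by_contra hlt
  push_neg at hlt
  have hge : h ≤ h * g i := Nat.le_mul_of_pos_right h (Nat.pos_of_ne_zero (hgpos i))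
  have h1 : h * g i - g 0 ∈ S := by
    by_contra h2
    have h3 : h * g i - g 0 ≤ ub := hub h2
    omega
  exact hh.1.2 _ h1 (by omega)

private lemma betaN_spec (hS : IsNumSgp S) {g : Fin ν → ℕ} [NeZero ν]
    (hg0 : 0 < g 0) (hgpos : ∀ l, g l ≠ 0) (i : Fin ν) :
    InApery S (g 0) (betaN S (g 0) g i * g i) ∧
      ordS S (betaN S (g 0) g i * g i) = betaN S (g 0) g i :=
  Nat.sSup_mem (betaSet_ne hS hg0 i) (betaSet_bdd hS hgpos i)

private lemma maxrep_box (hS : IsNumSgp S) {g : Fin ν → ℕ} [NeZero ν]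
    (hgen : Generates S g) (hg : ∀ l, g l ∈ S) (hgpos : ∀ l, g l ≠ 0)
    {u : ℕ} (hu : InApery S (g 0) u)
    {ρ : Fin ν → ℕ} (hρ : IsMaxRep S g ρ u) :
    ρ 0 = 0 ∧ ∀ j, ρ j ≤ betaN S (g 0) g j := by
  classical
  obtain ⟨hrep, hord⟩ := hρ
  have key : ∀ j : Fin ν, InApery S (g 0) (ρ j * g j) ∧ ordS S (ρ j * g j) = ρ j := by
    intro j
    have hsplit := sum_update_split ρ j g
    have hsplit' := sum_update_split' ρ j
    set rest := ∑ l, (Function.update ρ j 0) l * g l with hrest_def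
    have hrestS : rest ∈ S := (hgen _).mpr ⟨_, rfl⟩
    have hjS : ρ j * g j ∈ S :=
      (hgen _).mpr ⟨(fun l => if l = j then ρ j else 0), sum_ite_single g j (ρ j)⟩
    have hap : InApery S (g 0) (ρ j * g j) := by
      refine ⟨hjS, ?_⟩
      intro u' hu' heq
      exact hu.2 (u' + rest) (hS.2.1 _ hu' _ hrestS) (by omega)
    refine ⟨hap, ?_⟩
    have hle : ordS S (ρ j * g j) + ordS S rest ≤ ordS S u := by
      have h := ord_superadd hjS hrestS
      have : ρ j * g j + rest = u := by omega
      rwa [this] at h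
    have h2 : ∑ l, (Function.update ρ j 0) l ≤ ordS S rest :=
      ord_ge_rep hg hgpos (Function.update ρ j 0)
    have h3 : ρ j ≤ ordS S (ρ j * g j) := by
      have h := ord_ge_rep hg hgpos (fun l => if l = j then ρ j else 0)
      rwa [sum_ite_plain, sum_ite_single] at h
    omega
  constructor
  · have h0 := key 0
    by_contra hne
    have hpos : 1 ≤ ρ 0 := Nat.one_le_iff_ne_zero.mpr hne
    obtain ⟨hapS, hapNe⟩ := (key 0).1
    have : ρ 0 * g 0 = ((ρ 0 - 1) * g 0) + g 0 := by
      have hp : ρ 0 - 1 + 1 = ρ 0 := by omega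
      calc ρ 0 * g 0 = (ρ 0 - 1 + 1) * g 0 := by rw [hp]
      _ = (ρ 0 - 1) * g 0 + 1 * g 0 := by rw [add_mul]
      _ = ((ρ 0 - 1) * g 0) + g 0 := by rw [one_mul]
    have hmem : (ρ 0 - 1) * g 0 ∈ S :=
      (hgen _).mpr ⟨(fun l => if l = 0 then (ρ 0 - 1) else 0), sum_ite_single g 0 _⟩
    exact hapNe _ hmem (by omega)
  · intro j
    exact le_csSup (betaSet_bdd hS hgpos j) (key j)

private lemma unique_max_rep_beta (hS : IsNumSgp S) {g : Fin ν → ℕ} [NeZero ν]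
    (hgen : Generates S g) (hg : ∀ l, g l ∈ S) (hgpos : ∀ l, g l ≠ 0) (hg0 : 0 < g 0)
    (hrect : AperySet S (g 0) = Bset S (g 0) g) (i : Fin ν) (hi : i ≠ 0) :
    UniqueMaxRep S g (betaN S (g 0) g i * g i) := by
  classical
  have hβdummy : True := trivial
  obtain ⟨hap_b, hord_b⟩ := betaN_spec hS hg0 hgpos i
  refine ⟨fun j => if j = i then betaN S (g 0) g i else 0, ⟨?_, ?_⟩, ?_⟩
  · exact sum_ite_single g i (betaN S (g 0) g i)
  · rw [sum_ite_plain, hord_b]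
  · rintro lam ⟨hrep, hsum⟩
    obtain ⟨hlam0, hlamle⟩ := maxrep_box hS hgen hg hgpos hap_b ⟨hrep, hsum⟩
    have hsumβ : ∑ l, lam l = betaN S (g 0) g i := by rw [hsum, hord_b]
    by_cases hcase : lam i = betaN S (g 0) g i
    · funext j
      by_cases hj : j = i
      · simp [hj, hcase]
      · simp only [if_neg hj]
        have h1 := sum_update_split' lam i
        have h2 : ∑ l, (Function.update lam i 0) l = 0 := by omega
        have h3 := Finset.sum_eq_zero_iff.mp h2 j (Finset.mem_univ j)
        rwa [Function.update_of_ne hj] at h3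
    · exfalso
      have hlami : lam i < betaN S (g 0) g i := lt_of_le_of_ne (hlamle i) hcase
      set k := lam i + 1 with hk
      set bfun : Fin ν → ℕ := fun j => if j = 0 then 0 else betaN S (g 0) g j with hbfun
      set ufun : Fin ν → ℕ := fun j => if j = i then k else bfun j with hufun
      set w := ∑ l, bfun l * g l with hw
      set u := ∑ l, ufun l * g l with hu
      have hbfi : bfun i = betaN S (g 0) g i := by rw [hbfun]; simp [hi]
      have hwap : InApery S (g 0) w := by
        have hmem : w ∈ AperySet S (g 0) := by
          rw [hrect]
          refine ⟨bfun, by rw [hbfun]; simp, fun j => ?_, rfl⟩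
          by_cases hj : j = 0 <;> simp [hbfun, hj]
        exact hmem
      have huap : InApery S (g 0) u := by
        have hmem : u ∈ AperySet S (g 0) := by
          rw [hrect]
          refine ⟨ufun, ?_, fun j => ?_, rfl⟩
          · rw [hufun, hbfun]
            simp [Ne.symm hi]
          · by_cases hj : j = i
            · rw [hufun]; simp [hj]; omega
            · by_cases hj0 : j = 0 <;> simp [hufun, hbfun, hj, hj0, Ne.symm hi]
        exact hmem
      have hwS : w ∈ S := hwap.1
      have huS : u ∈ S := huap.1
      have hordw_le : ordS S w ≤ ∑ l, bfun l := by
        obtain ⟨ρw, hρw⟩ := max_rep_exists_s10 hgen hg hgpos hwS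
        have hbw := maxrep_box hS hgen hg hgpos hwap hρw
        calc ordS S w = ∑ l, ρw l := (hρw.2).symm
        _ ≤ ∑ l, bfun l := by
            refine Finset.sum_le_sum fun l _ => ?_
            by_cases hl : l = 0
            · rw [hbfun]; simp [hl]
              rw [hl] at *
              omega
            · rw [hbfun]; simp [hl]
              exact hbw.2 l
      have hordw_ge : ∑ l, bfun l ≤ ordS S w := ord_ge_rep hg hgpos bfun
      have hpt1 : ∀ l, ufun l + (if l = i then betaN S (g 0) g i - k else 0) = bfun l := by
        intro l
        by_cases hl : l = i
        · rw [hufun, hl, hbfi]; simp; omega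
        · rw [hufun]; simp [hl]
      have hsum1 : u + (betaN S (g 0) g i - k) * g i = w := by
        rw [hu, hw, ← sum_ite_single g i (betaN S (g 0) g i - k), ← Finset.sum_add_distrib]
        exact Finset.sum_congr rfl fun l _ => by rw [← add_mul, hpt1 l]
      have hvS : (betaN S (g 0) g i - k) * g i ∈ S :=
        (hgen _).mpr ⟨(fun l => if l = i then (betaN S (g 0) g i - k) else 0), sum_ite_single g i _⟩
      have hordv : betaN S (g 0) g i - k ≤ ordS S ((betaN S (g 0) g i - k) * g i) := by
        have h := ord_ge_rep hg hgpos (fun l => if l = i then (betaN S (g 0) g i - k) else 0)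
        rwa [sum_ite_plain, sum_ite_single] at h
      have hsumbu : ∑ l, bfun l = ∑ l, ufun l + (betaN S (g 0) g i - k) := by
        have h : ∑ l, bfun l = ∑ l, (ufun l + (if l = i then betaN S (g 0) g i - k else 0)) :=
          Finset.sum_congr rfl fun l _ => (hpt1 l).symm
        rw [h, Finset.sum_add_distrib, sum_ite_plain]
      have hordu_le : ordS S u ≤ ∑ l, ufun l := by
        have hsa := ord_superadd huS hvS
        rw [hsum1] at hsa
        omega
      have hordu_ge : ∑ l, ufun l ≤ ordS S u := ord_ge_rep hg hgpos ufun
      set ρ : Fin ν → ℕ := fun j => if j = i then (betaN S (g 0) g i - lam i) + k else bfun j - lam j with hρ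
      have hpt2 : ∀ l, ρ l + lam l = ufun l + (if l = i then betaN S (g 0) g i else 0) := by
        intro l
        by_cases hl : l = i
        · rw [hρ, hufun, hl]; simp; omega
        · have hlamle' : lam l ≤ bfun l := by
            by_cases hl0 : l = 0
            · rw [hbfun, hl0]; simp
              rw [hl0] at *
              omega
            · rw [hbfun]; simp [hl0]
              exact hlamle l
          rw [hρ, hufun]; simp [hl]
          omega
      have hρsum_g : ∑ l, ρ l * g l = u := by
        have h1 : ∑ l, ρ l * g l + ∑ l, lam l * g l = ∑ l, ufun l * g l + betaN S (g 0) g i * g i := by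
          rw [← Finset.sum_add_distrib, ← sum_ite_single g i (betaN S (g 0) g i), ← Finset.sum_add_distrib]
          exact Finset.sum_congr rfl fun l _ => by rw [← add_mul, ← add_mul, hpt2 l]
        rw [hrep] at h1
        omega
      have hρsum : ∑ l, ρ l = ∑ l, ufun l := by
        have h1 : ∑ l, ρ l + ∑ l, lam l = ∑ l, ufun l + betaN S (g 0) g i := by
          rw [← Finset.sum_add_distrib]
          have h : ∑ l, (ρ l + lam l) = ∑ l, (ufun l + (if l = i then betaN S (g 0) g i else 0)) :=
            Finset.sum_congr rfl fun l _ => hpt2 l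
          rw [h, Finset.sum_add_distrib, sum_ite_plain]
        omega
      have hmaxρ : IsMaxRep S g ρ u := ⟨hρsum_g, by omega⟩
      have hcontra := (maxrep_box hS hgen hg hgpos huap hmaxρ).2 i
      have hρi : ρ i = (betaN S (g 0) g i - lam i) + k := by rw [hρ]; simp
      rw [hρi] at hcontra
      omega

end AuxBetaRect


theorem betaRect_beta_eq_gamma (S : Set ℕ) {ν : ℕ} [NeZero ν] (g : Fin ν → ℕ) (hν : 2 ≤ ν)
    (hS : IsNumSgp S) (hgen : MinimalGen S g) (hmono : StrictMono g)
    (hmpos : 0 < g 0) (hmul : ∀ s ∈ S, s ≠ 0 → g 0 ≤ s)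
    (hrect : AperySet S (g 0) = Bset S (g 0) g) :
    ∀ i : Fin ν, i ≠ 0 → betaN S (g 0) g i = gammaN S (g 0) g i := by
  intro i hi
  have hg : ∀ l, g l ∈ S := by
    intro l
    refine (hgen.1 (g l)).mpr ⟨fun t => if t = l then 1 else 0, ?_⟩
    rw [sum_ite_single g l 1, one_mul]
  have hgpos : ∀ l, g l ≠ 0 := by
    intro l
    have h0 : (0 : Fin ν) ≤ l := Fin.zero_le l
    have := hmono.monotone h0
    omega
  have humr := unique_max_rep_beta hS hgen.1 hg hgpos hmpos hrect i hi
  have hspec := betaN_spec hS hmpos hgpos i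
  have hsub : {h : ℕ | InApery S (g 0) (h * g i) ∧ ordS S (h * g i) = h ∧
        UniqueMaxRep S g (h * g i)} ⊆
      {h : ℕ | InApery S (g 0) (h * g i) ∧ ordS S (h * g i) = h} :=
    fun h hh => ⟨hh.1, hh.2.1⟩
  have hBbdd : BddAbove {h : ℕ | InApery S (g 0) (h * g i) ∧ ordS S (h * g i) = h} :=
    betaSet_bdd hS hgpos i
  have hGbdd : BddAbove {h : ℕ | InApery S (g 0) (h * g i) ∧ ordS S (h * g i) = h ∧
      UniqueMaxRep S g (h * g i)} := hBbdd.mono hsub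
  have hmemG : betaN S (g 0) g i ∈ {h : ℕ | InApery S (g 0) (h * g i) ∧
      ordS S (h * g i) = h ∧ UniqueMaxRep S g (h * g i)} := ⟨hspec.1, hspec.2, humr⟩
  have h1 : betaN S (g 0) g i ≤ gammaN S (g 0) g i := le_csSup hGbdd hmemG
  have h2 : gammaN S (g 0) g i ≤ betaN S (g 0) g i := by
    have hne : Set.Nonempty {h : ℕ | InApery S (g 0) (h * g i) ∧ ordS S (h * g i) = h ∧
        UniqueMaxRep S g (h * g i)} := ⟨_, hmemG⟩
    have hm := Nat.sSup_mem hne hGbdd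
    exact le_csSup hBbdd (hsub hm)
  omega
end
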